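/- Let n be a positive integer, let H be an n×n Hermitian complex matrix, and let R be any n×n complex matrix. Then the following are equivalent: (1) for every eigenvector ψ of H (i.e., every nonzero ψ ∈ ℂⁿ with Hψ = λψ for some λ), the inner product ⟨ψ, Rψ⟩ equals 0; (2) there exists an n×n complex matrix M such that HM − MH = R. -/

import Mathlib

set_option maxHeartbeats 800000


open Matrix

private lemma bilin_single {n : ℕ} (A : Matrix (Fin n) (Fin n) ℂ) (j k : Fin n) (a b : ℂ) :
    star (Pi.single j a) ⬝ᵥ A *ᵥ (Pi.single k b) = star a * A j k * b := by
  simp [dotProduct, mulVec, Pi.single_apply, Finset.mul_sum, mul_comm, mul_assoc, mul_left_comm,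
    apply_ite (starRingEnd ℂ), mul_ite, ite_mul, Finset.sum_ite_eq]

private lemma quad_expand {n : ℕ} (A : Matrix (Fin n) (Fin n) ℂ) (j k : Fin n) (a b : ℂ) :
    star (Pi.single j a + Pi.single k b) ⬝ᵥ A *ᵥ (Pi.single j a + Pi.single k b) =
      star a * A j j * a + star a * A j k * b + star b * A k j * a + star b * A k k * b := by
  rw [star_add, mulVec_add, dotProduct_add, add_dotProduct, add_dotProduct,
    bilin_single, bilin_single, bilin_single, bilin_single]
  ring

/-- The orthogonality condition `⟨ψ, Rψ⟩ = 0` for every eigenvector `ψ` of a Hermitian `H`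
holds if and only if `R` is a commutator `R = HM − MH` for some matrix `M`. -/
theorem orthogonality_iff_commutator (n : ℕ) (hn : 0 < n)
    (H : Matrix (Fin n) (Fin n) ℂ) (hH : H.IsHermitian)
    (R : Matrix (Fin n) (Fin n) ℂ) :
    (∀ ψ : Fin n → ℂ, ψ ≠ 0 → (∃ μ : ℂ, H.mulVec ψ = μ • ψ) →
        star ψ ⬝ᵥ R.mulVec ψ = 0) ↔
      ∃ M : Matrix (Fin n) (Fin n) ℂ, H * M - M * H = R := by
  constructor
  · intro hcond
    set U : Matrix (Fin n) (Fin n) ℂ := (hH.eigenvectorUnitary : Matrix (Fin n) (Fin n) ℂ)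
      with hUdef
    set d : Fin n → ℝ := hH.eigenvalues with hddef
    set D : Matrix (Fin n) (Fin n) ℂ := diagonal (fun i => (d i : ℂ)) with hDdef
    have hUU : star U * U = 1 := Matrix.mem_unitaryGroup_iff'.mp hH.eigenvectorUnitary.2
    have hUU' : U * star U = 1 := Matrix.mem_unitaryGroup_iff.mp hH.eigenvectorUnitary.2
    have hspec : H = U * D * star U := by
      have := hH.spectral_theorem
      simpa [hUdef, hDdef, hddef, Function.comp_def] using this
    have hHU : H * U = U * D := by
      rw [hspec, mul_assoc, hUU, mul_one]
    clear_value U d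
    set R' : Matrix (Fin n) (Fin n) ℂ := star U * R * U with hR'def
    -- the inner product in terms of R'
    have key : ∀ v : Fin n → ℂ, star (U *ᵥ v) ⬝ᵥ R *ᵥ (U *ᵥ v) = star v ⬝ᵥ R' *ᵥ v :=
      fun v => by
        calc star (U *ᵥ v) ⬝ᵥ R *ᵥ (U *ᵥ v)
            = (star v ᵥ* Uᴴ) ⬝ᵥ ((R * U) *ᵥ v) := by rw [star_mulVec, mulVec_mulVec]
          _ = ((star v ᵥ* Uᴴ) ᵥ* (R * U)) ⬝ᵥ v := by rw [dotProduct_mulVec]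
          _ = (star v ᵥ* (Uᴴ * (R * U))) ⬝ᵥ v := by rw [vecMul_vecMul]
          _ = star v ⬝ᵥ R' *ᵥ v := by
              rw [dotProduct_mulVec, hR'def, Matrix.star_eq_conjTranspose, mul_assoc]
    -- eigenvector property of combinations of columns with equal eigenvalue
    have heig : ∀ (j k : Fin n) (a b : ℂ), d j = d k →
        H *ᵥ (U *ᵥ (Pi.single j a + Pi.single k b)) =
          ((d j : ℂ)) • (U *ᵥ (Pi.single j a + Pi.single k b)) := by
      intro j k a b hjk
      have hDv : D *ᵥ (Pi.single j a + Pi.single k b) =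
          ((d j : ℂ)) • (Pi.single j a + Pi.single k b) := by
        funext i
        rcases eq_or_ne i j with rfl | hij
        · simp [hDdef, mulVec_diagonal]
        · rcases eq_or_ne i k with rfl | hik
          · simp [hDdef, mulVec_diagonal, hjk, Pi.single_eq_of_ne hij]
          · simp [hDdef, mulVec_diagonal, Pi.single_eq_of_ne hij, Pi.single_eq_of_ne hik]
      rw [mulVec_mulVec, hHU, ← mulVec_mulVec, hDv, mulVec_smul]
    -- nonzeroness
    have hUinj : ∀ v : Fin n → ℂ, v ≠ 0 → U *ᵥ v ≠ 0 := by
      intro v hv h0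
      apply hv
      have h1 : star U *ᵥ (U *ᵥ v) = v := by
        rw [mulVec_mulVec, hUU, one_mulVec]
      rw [h0, mulVec_zero] at h1
      exact h1.symm
    -- vanishing of R' on equal-eigenvalue pairs
    have hvan : ∀ e : ℂ, (1 : ℂ) + e ≠ 0 → ∀ j k : Fin n, d j = d k →
        star (1 : ℂ) * R' j j * 1 + star (1 : ℂ) * R' j k * e + star e * R' k j * 1 +
          star e * R' k k * e = 0 := by
      intro e he j k hjk
      have hnz : U *ᵥ (Pi.single j 1 + Pi.single k e) ≠ 0 := by
        apply hUinj
        intro h0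
        rcases eq_or_ne j k with rfl | hjk'
        · have := congr_fun h0 j
          simp [Pi.single_apply] at this
          exact he this
        · have := congr_fun h0 j
          simp [Pi.single_apply, hjk'] at this
      have hev : ∃ μ : ℂ, H *ᵥ (U *ᵥ (Pi.single j 1 + Pi.single k e)) =
          μ • (U *ᵥ (Pi.single j 1 + Pi.single k e)) := ⟨_, heig j k 1 e hjk⟩
      have h := hcond _ hnz hev
      rw [key, quad_expand] at h
      exact h
    have hdiag : ∀ j : Fin n, R' j j = 0 := by
      intro j
      have := hvan 0 (by norm_num) j j rfl
      simpa using this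
    have hR'0 : ∀ j k : Fin n, d j = d k → R' j k = 0 := by
      intro j k hjk
      rcases eq_or_ne j k with rfl | hne
      · exact hdiag j
      · have h1 := hvan 1 (by norm_num) j k hjk
        have h2 := hvan Complex.I (by
          intro h0
          have := congr_arg Complex.im h0
          simp at this) j k hjk
        rw [hdiag j, hdiag k] at h1 h2
        simp only [star_one, one_mul, mul_one, mul_zero, zero_mul, add_zero, zero_add,
          RCLike.star_def, Complex.conj_I] at h1 h2
        -- h1 : R' j k + R' k j = 0
        -- h2 : R' j k * I + (-I) * R' k j = 0  (up to arrangement)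
        have hI : Complex.I * Complex.I = -1 := Complex.I_mul_I
        linear_combination (1 / 2) * h1 - (Complex.I / 2) * h2 + ((R' j k - R' k j) / 2) * hI
    -- construct M
    refine ⟨U * (Matrix.of fun j k =>
      if d j = d k then 0 else R' j k / ((d j : ℂ) - (d k : ℂ))) * star U, ?_⟩
    set M' : Matrix (Fin n) (Fin n) ℂ := Matrix.of fun j k =>
      if d j = d k then 0 else R' j k / ((d j : ℂ) - (d k : ℂ)) with hM'def
    have hcomm : D * M' - M' * D = R' := by
      ext j k
      rw [Matrix.sub_apply, diagonal_mul, mul_diagonal]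
      by_cases h : d j = d k
      · simp [hM'def, h, hR'0 j k h]
      · have hne : (d j : ℂ) - (d k : ℂ) ≠ 0 := by
          intro h0
          exact h (by exact_mod_cast sub_eq_zero.mp h0)
        simp only [hM'def, Matrix.of_apply, if_neg h]
        field_simp
    calc H * (U * M' * star U) - U * M' * star U * H
        = U * (D * M' - M' * D) * star U := by
          rw [hspec]
          simp only [Matrix.mul_sub, Matrix.sub_mul]
          congr 1
          · simp only [mul_assoc]
            rw [← mul_assoc (star U) U, hUU, one_mul]
          · simp only [mul_assoc]
            rw [← mul_assoc (star U) U, hUU, one_mul]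
      _ = R := by
          rw [hcomm, hR'def]
          simp only [mul_assoc]
          rw [hUU', mul_one, ← mul_assoc, hUU', one_mul]
  · rintro ⟨M, rfl⟩ ψ hψ ⟨μ, hμ⟩
    have hψψ : star ψ ⬝ᵥ ψ ≠ 0 := by
      open ComplexOrder in
      exact fun h => hψ (dotProduct_star_self_eq_zero.mp h)
    have hvm : star ψ ᵥ* H = star (μ • ψ) := by
      rw [← hμ, star_mulVec, hH.eq]
    have hreal : star μ = μ := by
      have h1 : star ψ ⬝ᵥ H *ᵥ ψ = μ * (star ψ ⬝ᵥ ψ) := by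
        rw [hμ]; simp [dotProduct_smul]
      have h2 : star ψ ⬝ᵥ H *ᵥ ψ = star μ * (star ψ ⬝ᵥ ψ) := by
        rw [dotProduct_mulVec, hvm]
        simp [star_smul, smul_dotProduct]
      exact mul_right_cancel₀ hψψ (h2.symm.trans h1)
    have e1 : star ψ ⬝ᵥ (H * M) *ᵥ ψ = μ * (star ψ ⬝ᵥ M *ᵥ ψ) := by
      rw [← mulVec_mulVec, dotProduct_mulVec, hvm, star_smul, hreal, smul_dotProduct,
        smul_eq_mul]
    have e2 : star ψ ⬝ᵥ (M * H) *ᵥ ψ = μ * (star ψ ⬝ᵥ M *ᵥ ψ) := by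
      rw [← mulVec_mulVec, hμ, mulVec_smul]
      simp [dotProduct_smul]
    rw [sub_mulVec, dotProduct_sub, e1, e2, sub_self]
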